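/- Let ℛ be a linear growing TRS over 𝓕 and let 𝒟(ℛ) be the powerset-pair automaton built from 𝒞'_{NF_{ℛ•}}(ℛ). For every s ∈ 𝒯(𝓕): if s →_{Γ_𝒟}* [S,P] and P ⊆ Q_f, then for every redex position p of s, s[•]_p ∈ (→_ℛ*)[NF_{ℛ•}], i.e., s[•]_p rewrites in ℛ to a ground ℛ•-normal form. -/

import Mathlib

set_option maxHeartbeats 1000000

/-! ## Terms over a signature -/

/-- Terms over a signature given by a type `F` of function symbols together with
an arity function `ar`; variables are natural numbers. -/
inductive Term (F : Type) (ar : F → ℕ) : Type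
  | var : ℕ → Term F ar
  | app : (f : F) → (Fin (ar f) → Term F ar) → Term F ar

namespace Term

variable {F : Type} {ar : F → ℕ}

/-- The (finite) set of variables of a term. -/
def vars : Term F ar → Finset ℕ
  | var n => {n}
  | app _ ts => Finset.univ.biUnion fun i => (ts i).vars

/-- A term is ground if it contains no variables. -/
def Ground (t : Term F ar) : Prop := t.vars = ∅

/-- The number of occurrences of the variable `n` in a term. -/
def count (n : ℕ) : Term F ar → ℕ
  | var m => if m = n then 1 else 0
  | app _ ts => ∑ i, (ts i).count n

/-- A term is linear if no variable occurs twice in it. -/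
def Linear (t : Term F ar) : Prop := ∀ n, t.count n ≤ 1

/-- Applying a substitution to a term. -/
def subst (σ : ℕ → Term F ar) : Term F ar → Term F ar
  | var n => σ n
  | app f ts => app f fun i => (ts i).subst σ

/-- The subterm at a position (a list of argument indices), if the position is valid. -/
def subtermAt : Term F ar → List ℕ → Option (Term F ar)
  | t, [] => some t
  | var _, _ :: _ => none
  | app f ts, i :: p => if h : i < ar f then (ts ⟨i, h⟩).subtermAt p else none

/-- Replacing the subterm at a position, if the position is valid. -/
def replaceAt : Term F ar → List ℕ → Term F ar → Option (Term F ar)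
  | _, [], u => some u
  | var _, _ :: _, _ => none
  | app f ts, i :: p, u =>
      if h : i < ar f then
        ((ts ⟨i, h⟩).replaceAt p u).map fun s => app f (Function.update ts ⟨i, h⟩ s)
      else none

/-- `s.IsSubtermOf t` : `s` is a subterm of `t`. -/
def IsSubtermOf (s t : Term F ar) : Prop := ∃ p, t.subtermAt p = some s

/-- Relabelling of function symbols along an arity-preserving map of signatures. -/
def relabel {G : Type} {arG : G → ℕ} (φ : F → G) (h : ∀ f, arG (φ f) = ar f) :
    Term F ar → Term G arG
  | var n => var n
  | app f ts => app (φ f) fun i => (ts (Fin.cast (h f) i)).relabel φ h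

end Term

/-! ## Rewriting -/

/-- One-step rewriting with a set of rewrite rules: there are a position `p` of `s`,
a rule `(l, r)` and a substitution `σ` with `s|_p = lσ` and `t = s[rσ]_p`. -/
def Rewrites {F : Type} {ar : F → ℕ} (R : Set (Term F ar × Term F ar))
    (s t : Term F ar) : Prop :=
  ∃ (p : List ℕ) (l r : Term F ar) (σ : ℕ → Term F ar),
    (l, r) ∈ R ∧ s.subtermAt p = some (l.subst σ) ∧ s.replaceAt p (r.subst σ) = some t

/-- Many-step rewriting (reflexive–transitive closure). -/
abbrev RewritesStar {F : Type} {ar : F → ℕ} (R : Set (Term F ar × Term F ar)) :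
    Term F ar → Term F ar → Prop :=
  Relation.ReflTransGen (Rewrites R)

/-- A term rewriting system: a finite set of rules whose left-hand sides are not variables. -/
structure TRS (F : Type) (ar : F → ℕ) where
  rules : Set (Term F ar × Term F ar)
  finite : rules.Finite
  lhs_not_var : ∀ lr ∈ rules, ∀ n, lr.1 ≠ Term.var n

namespace TRS

variable {F : Type} {ar : F → ℕ}

def LeftLinear (R : TRS F ar) : Prop := ∀ lr ∈ R.rules, lr.1.Linear

def RightLinear (R : TRS F ar) : Prop := ∀ lr ∈ R.rules, lr.2.Linear

/-- A TRS is linear if all left- and right-hand sides are linear terms. -/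
def IsLinear (R : TRS F ar) : Prop := R.LeftLinear ∧ R.RightLinear

/-- A TRS is growing if every variable occurring both in the left- and the right-hand
side of a rule occurs at depth 1 in the left-hand side. -/
def Growing (R : TRS F ar) : Prop :=
  ∀ lr ∈ R.rules, ∀ n ∈ lr.1.vars, n ∈ lr.2.vars →
    ∀ (f : F) (ts : Fin (ar f) → Term F ar), lr.1 = Term.app f ts →
      ∀ i, n ∈ (ts i).vars → ts i = Term.var n

/-- A redex is an instance of a left-hand side. -/
def IsRedex (R : TRS F ar) (s : Term F ar) : Prop :=
  ∃ lr ∈ R.rules, ∃ σ : ℕ → Term F ar, s = lr.1.subst σ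

/-- `p` is a redex position of `s`. -/
def RedexPos (R : TRS F ar) (s : Term F ar) (p : List ℕ) : Prop :=
  ∃ u, s.subtermAt p = some u ∧ R.IsRedex u

def Reducible (R : TRS F ar) (s : Term F ar) : Prop := ∃ p, R.RedexPos s p

/-- A term is root-stable if it cannot be rewritten to a redex. -/
def RootStable (R : TRS F ar) (s : Term F ar) : Prop :=
  ¬ ∃ t, RewritesStar R.rules s t ∧ R.IsRedex t

/-- Ground normal forms. -/
def NFset (R : TRS F ar) : Set (Term F ar) := { t | t.Ground ∧ ¬ R.Reducible t }

/-- Ground redexes. -/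
def RedexSet (R : TRS F ar) : Set (Term F ar) := { t | t.Ground ∧ R.IsRedex t }

/-- Root-stable ground terms. -/
def RSset (R : TRS F ar) : Set (Term F ar) := { t | t.Ground ∧ R.RootStable t }

/-- Relabelling a TRS along an arity-preserving map of signatures. -/
def relabel {G : Type} {arG : G → ℕ} (R : TRS F ar) (φ : F → G)
    (h : ∀ f, arG (φ f) = ar f) : TRS G arG where
  rules := (fun lr => (lr.1.relabel φ h, lr.2.relabel φ h)) '' R.rules
  finite := R.finite.image _
  lhs_not_var := by
    rintro lr ⟨lr0, h0, rfl⟩ n hn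
    dsimp only at hn
    cases h1 : lr0.1 with
    | var m => exact absurd h1 (R.lhs_not_var lr0 h0 m)
    | app f ts =>
        rw [h1] at hn
        simp only [Term.relabel] at hn
        cases hn

end TRS

/-! ## Tree automata -/

/-- A transition rule `f(q₁,…,qₙ) → q` of a bottom-up tree automaton. -/
abbrev TARule (F : Type) (ar : F → ℕ) (Q : Type) : Type :=
  (f : F) × ((Fin (ar f) → Q) × Q)

/-- A (finite bottom-up) tree automaton without ε-transitions. -/
structure TreeAutomaton (F : Type) (ar : F → ℕ) (Q : Type) where
  trans : Set (TARule F ar Q)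
  final : Set Q

/-- `Reaches Δ t q` : the ground term `t` rewrites to the state `q` using the
transition rules `Δ`. -/
inductive Reaches {F : Type} {ar : F → ℕ} {Q : Type} (Δ : Set (TARule F ar Q)) :
    Term F ar → Q → Prop
  | app {f : F} {ts : Fin (ar f) → Term F ar} {qs : Fin (ar f) → Q} {q : Q} :
      (∀ i, Reaches Δ (ts i) (qs i)) → (⟨f, qs, q⟩ : TARule F ar Q) ∈ Δ →
      Reaches Δ (Term.app f ts) q

/-- `ReachesT Δ θ t q` : the term `t`, whose variables are interpreted as the states
given by `θ`, rewrites to the state `q` using the transition rules `Δ`. -/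
inductive ReachesT {F : Type} {ar : F → ℕ} {Q : Type} (Δ : Set (TARule F ar Q))
    (θ : ℕ → Q) : Term F ar → Q → Prop
  | var (n : ℕ) : ReachesT Δ θ (Term.var n) (θ n)
  | app {f : F} {ts : Fin (ar f) → Term F ar} {qs : Fin (ar f) → Q} {q : Q} :
      (∀ i, ReachesT Δ θ (ts i) (qs i)) → (⟨f, qs, q⟩ : TARule F ar Q) ∈ Δ →
      ReachesT Δ θ (Term.app f ts) q

/-- The language of a tree automaton: all ground terms reaching a final state. -/
def Lang {F : Type} {ar : F → ℕ} {Q : Type} (A : TreeAutomaton F ar Q) :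
    Set (Term F ar) :=
  { t | t.Ground ∧ ∃ q ∈ A.final, Reaches A.trans t q }

/-- A set of ground terms is recognizable if it is the language of some finite
tree automaton. -/
def Recognizable {F : Type} {ar : F → ℕ} (T : Set (Term F ar)) : Prop :=
  ∃ (Q : Type) (_ : Fintype Q) (A : TreeAutomaton F ar Q), T = Lang A

/-- The set of states occurring in a set of transition rules. -/
def statesOf {F : Type} {ar : F → ℕ} {Q : Type} (Γ : Set (TARule F ar Q)) : Set Q :=
  { q | ∃ ρ ∈ Γ, ρ.2.2 = q ∨ ∃ i, ρ.2.1 i = q }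

/-! ## The automaton `ℬ(ℛ)` -/

/-- The canonical representative of the state `⟨t⟩` of `ℬ(ℛ)`: all variables are
identified with the single state `⟨x⟩`, represented by `var 0`. -/
def stPattern {F : Type} {ar : F → ℕ} : Term F ar → Term F ar
  | Term.var _ => Term.var 0
  | Term.app f ts => Term.app f ts

/-- `S_ℛ`: the set of all subterms of arguments of left-hand sides of `ℛ`. -/
def SR {F : Type} {ar : F → ℕ} (R : TRS F ar) : Set (Term F ar) :=
  { s | ∃ lr ∈ R.rules, ∃ (f : F) (ts : Fin (ar f) → Term F ar),
        lr.1 = Term.app f ts ∧ ∃ i, s.IsSubtermOf (ts i) }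

/-- The representatives of the states of `ℬ(ℛ)`: the patterns of terms of `S_ℛ`,
together with `⟨x⟩`. -/
def BStateSet {F : Type} {ar : F → ℕ} (R : TRS F ar) : Set (Term F ar) :=
  stPattern '' SR R ∪ {Term.var 0}

/-- The matching rules of `ℬ(ℛ)` (with states encoded by `enc`):
`f(⟨t₁⟩,…,⟨tₙ⟩) → ⟨t⟩` for every `t = f(t₁,…,tₙ) ∈ S_ℛ`. -/
def BMatch {F : Type} {ar : F → ℕ} {Q : Type} (R : TRS F ar) (enc : Term F ar → Q) :
    Set (TARule F ar Q) :=
  { ρ | ∃ (f : F) (ts : Fin (ar f) → Term F ar), Term.app f ts ∈ SR R ∧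
        ρ = ⟨f, fun i => enc (stPattern (ts i)), enc (Term.app f ts)⟩ }

/-- The propagation rules `f(⟨x⟩,…,⟨x⟩) → ⟨x⟩` for every function symbol `f`. -/
def BProp {F : Type} {ar : F → ℕ} {Q : Type} (enc : Term F ar → Q) :
    Set (TARule F ar Q) :=
  { ρ | ∃ f : F, ρ = ⟨f, fun _ => enc (Term.var 0), enc (Term.var 0)⟩ }

/-- The transition rules of the automaton `ℬ(ℛ)`. -/
def BTrans {F : Type} {ar : F → ℕ} {Q : Type} (R : TRS F ar) (enc : Term F ar → Q) :
    Set (TARule F ar Q) :=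
  BMatch R enc ∪ BProp enc

/-- `Σ(t)`: the set of ground instances of the term `t`. -/
def GInst {F : Type} {ar : F → ℕ} (t : Term F ar) : Set (Term F ar) :=
  { s | s.Ground ∧ ∃ σ, s = t.subst σ }

/-! ## Saturation -/

/-- The state `qᵢ` associated to the argument `lᵢ` of a left-hand side in the
saturation rule: `lᵢθ` if `lᵢ` is a variable occurring in `r` (whose variable set
is `rv`), and `⟨lᵢ⟩` otherwise. -/
def satArg {F : Type} {ar : F → ℕ} {Q : Type} (enc : Term F ar → Q) (θ : ℕ → Q)
    (rv : Finset ℕ) : Term F ar → Q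
  | Term.var n => if n ∈ rv then θ n else enc (Term.var 0)
  | Term.app f ts => enc (Term.app f ts)

/-- One step of the saturation process: add all transition rules `f(q₁,…,qₙ) → q`
obtained from a rewrite rule `f(l₁,…,lₙ) → r` and a state substitution `θ`
(with values among the states `Qc` of the automaton) such that `rθ →_Γ* q`. -/
def satStep {F : Type} {ar : F → ℕ} {Q : Type} (R : TRS F ar) (enc : Term F ar → Q)
    (Qc : Set Q) (Γ : Set (TARule F ar Q)) : Set (TARule F ar Q) :=
  Γ ∪ { ρ | ∃ (f : F) (ls : Fin (ar f) → Term F ar) (r : Term F ar) (θ : ℕ → Q) (q : Q),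
        (Term.app f ls, r) ∈ R.rules ∧ (∀ n ∈ r.vars, θ n ∈ Qc) ∧ ReachesT Γ θ r q ∧
        ρ = ⟨f, fun i => satArg enc θ r.vars (ls i), q⟩ }

/-- The saturated set of transition rules: the closure of `Γ0` under the saturation
inference rule. -/
def satGamma {F : Type} {ar : F → ℕ} {Q : Type} (R : TRS F ar) (enc : Term F ar → Q)
    (Qc : Set Q) (Γ0 : Set (TARule F ar Q)) : Set (TARule F ar Q) :=
  ⋃ n, (satStep R enc Qc)^[n] Γ0

/-! ## The automaton `𝒞_T(ℛ)` and its extension `𝒞'_T(ℛ)` -/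

/-- The data of the construction of the automaton `𝒞_T(ℛ)`: an automaton `𝒜_T`
recognizing `T` with all states accessible and state set `QA`, together with an
encoding `enc` of the states `⟨t⟩` of `ℬ(ℛ)` into the common state type `Q`, such
that every state common to `𝒜_T` and `ℬ(ℛ)` accepts the same set of terms in both
automata. -/
structure CSetup {G : Type} [Fintype G] {arG : G → ℕ} (Q : Type) [Fintype Q]
    (Rg : TRS G arG) (T : Set (Term G arG)) where
  enc : Term G arG → Q
  A : TreeAutomaton G arG Q
  QA : Set Q
  henc : Set.InjOn enc (BStateSet Rg)
  hAstates : ∀ ρ ∈ A.trans, ρ.2.2 ∈ QA ∧ ∀ i, ρ.2.1 i ∈ QA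
  hfinal : A.final ⊆ QA
  hacc : ∀ q ∈ QA, ∃ s : Term G arG, s.Ground ∧ Reaches A.trans s q
  hground : ∃ s : Term G arG, s.Ground
  hshared : ∀ q ∈ QA ∩ enc '' BStateSet Rg, ∀ s : Term G arG,
      Reaches A.trans s q ↔ Reaches (BTrans Rg enc) s q
  hT : T = Lang A

namespace CSetup

variable {G : Type} [Fintype G] {arG : G → ℕ} {Q : Type} [Fintype Q]
  {Rg : TRS G arG} {T : Set (Term G arG)}

/-- The set of states of the automaton `𝒞_T(ℛ)`. -/
def Qstates (C : CSetup Q Rg T) : Set Q := C.QA ∪ C.enc '' BStateSet Rg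

/-- The transition rules of `𝒞_T(ℛ)` before saturation: the union of `𝒜_T` and `ℬ(ℛ)`. -/
def Γ0 (C : CSetup Q Rg T) : Set (TARule G arG Q) := C.A.trans ∪ BTrans Rg C.enc

/-- The transition rules of `𝒞_T(ℛ)` after saturation. -/
def Γsat (C : CSetup Q Rg T) : Set (TARule G arG Q) :=
  satGamma Rg C.enc C.Qstates C.Γ0

end CSetup

/-- The redex rules `f(⟪l₁⟫,…,⟪lₙ⟫) → q_r` for every left-hand side `f(l₁,…,lₙ)`. -/
def RedexRules {F : Type} {ar : F → ℕ} {Q : Type} (R : TRS F ar)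
    (enc2 : Term F ar → Q) (qr : Q) : Set (TARule F ar Q) :=
  { ρ | ∃ (f : F) (ls : Fin (ar f) → Term F ar) (r : Term F ar),
        (Term.app f ls, r) ∈ R.rules ∧
        ρ = ⟨f, fun i => enc2 (stPattern (ls i)), qr⟩ }

/-- The rules `f(⟨x⟩,…,q_r,…,⟨x⟩) → q_r`. -/
def QrProp {F : Type} {ar : F → ℕ} {Q : Type} (enc : Term F ar → Q) (qr : Q) :
    Set (TARule F ar Q) :=
  { ρ | ∃ (f : F) (j : Fin (ar f)),
        ρ = ⟨f, fun i => if i = j then qr else enc (Term.var 0), qr⟩ }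

/-- The data of the construction of the automaton `𝒞'_T(ℛ)`: `𝒞_T(ℛ)` extended with
a fresh copy `⟪t⟫` (encoded by `enc2`, with `⟪x⟫ = ⟨x⟩`) of the states of `ℬ(ℛ)` and
a fresh state `q_r`. -/
structure CpSetup {G : Type} [Fintype G] {arG : G → ℕ} (Q : Type) [Fintype Q]
    (Rg : TRS G arG) (T : Set (Term G arG)) extends CSetup Q Rg T where
  enc2 : Term G arG → Q
  qr : Q
  henc2 : Set.InjOn enc2 (BStateSet Rg)
  hx : enc2 (Term.var 0) = enc (Term.var 0)
  hfresh : (enc2 '' (BStateSet Rg \ {Term.var 0}) ∪ {qr}) ∩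
              (QA ∪ enc '' BStateSet Rg) = ∅
  hqr : qr ∉ enc2 '' (BStateSet Rg \ {Term.var 0})

namespace CpSetup

variable {G : Type} [Fintype G] {arG : G → ℕ} {Q : Type} [Fintype Q]
  {Rg : TRS G arG} {T : Set (Term G arG)}

/-- The transition rules `Γ'` of the automaton `𝒞'_T(ℛ)`. -/
def Γ' (C : CpSetup Q Rg T) : Set (TARule G arG Q) :=
  C.toCSetup.Γsat ∪ BMatch Rg C.enc2 ∪ RedexRules Rg C.enc2 C.qr ∪ QrProp C.enc C.qr

end CpSetup

/-! ## The signature `𝓖 = 𝓕 ∪ {•}` -/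

/-- The arity function of the extended signature `𝓕 ∪ {•}` (with `•` the fresh
constant `none`). -/
def arB {F : Type} (ar : F → ℕ) : Option F → ℕ
  | none => 0
  | some f => ar f

/-- The term `•`. -/
def bulletTm {F : Type} {ar : F → ℕ} : Term (Option F) (arB ar) :=
  Term.app none Fin.elim0

/-- The embedding of `𝒯(𝓕)`-terms into terms over `𝓕 ∪ {•}`. -/
def liftB {F : Type} {ar : F → ℕ} : Term F ar → Term (Option F) (arB ar) :=
  Term.relabel some (fun _ => rfl)

/-- A TRS over `𝓕` viewed as a TRS over `𝓕 ∪ {•}`. -/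
def TRS.liftB {F : Type} {ar : F → ℕ} (R : TRS F ar) : TRS (Option F) (arB ar) :=
  R.relabel some (fun _ => rfl)

/-- The TRS `ℛ• = ℛ ∪ {• → •}` over the signature `𝓕 ∪ {•}`. -/
def TRS.bullet {F : Type} {ar : F → ℕ} (R : TRS F ar) : TRS (Option F) (arB ar) where
  rules := R.liftB.rules ∪ {(bulletTm, bulletTm)}
  finite := R.liftB.finite.union (Set.finite_singleton _)
  lhs_not_var := by
    rintro lr (h | h) n hn
    · exact R.liftB.lhs_not_var lr h n hn
    · rw [Set.mem_singleton_iff] at h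
      rw [h] at hn
      simp [bulletTm] at hn

/-! ## The automaton `𝒟(ℛ)` -/

/-- For a symbol `g` and sets of states `Ss` for the arguments, the set
`g(S₁,…,Sₙ)↓` of states reachable from `g` applied to states chosen from the `Ssᵢ`. -/
def oneStep {G : Type} {arG : G → ℕ} {Q : Type} (Γ : Set (TARule G arG Q)) (g : G)
    (Ss : Fin (arG g) → Set Q) : Set Q :=
  { q | ∃ qs : Fin (arG g) → Q, (∀ i, qs i ∈ Ss i) ∧ (⟨g, qs, q⟩ : TARule G arG Q) ∈ Γ }

/-- `t↓` for a ground term `t`: the set of states reachable from `t`. -/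
def dn {G : Type} {arG : G → ℕ} {Q : Type} (Γ : Set (TARule G arG Q))
    (t : Term G arG) : Set Q :=
  { q | Reaches Γ t q }

/-- There is a rewrite rule with left-hand side `g(l₁,…,lₙ)` such that
`⟪lᵢ⟫ ∈ Ssᵢ` for all `i`. -/
def LhsMatch {G : Type} {arG : G → ℕ} {Q : Type} (Rg : TRS G arG)
    (enc2 : Term G arG → Q) (g : G) (Ss : Fin (arG g) → Set Q) : Prop :=
  ∃ (ls : Fin (arG g) → Term G arG) (r : Term G arG),
    (Term.app g ls, r) ∈ Rg.rules ∧ ∀ i, enc2 (stPattern (ls i)) ∈ Ss i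

/-- The transition rules of the automaton `𝒟(ℛ)` over `𝓕`, built from the transition
rules `Γ'` of `𝒞'_{NF}(ℛ)` over `𝓕 ∪ {•}`. -/
def DTrans {F : Type} {ar : F → ℕ} {Q : Type} (Rb : TRS (Option F) (arB ar))
    (Γ' : Set (TARule (Option F) (arB ar) Q))
    (enc enc2 : Term (Option F) (arB ar) → Q) :
    Set (TARule F ar (Set Q × Set Q)) :=
  { ρ | ∃ (f : F) (SP : Fin (ar f) → Set Q × Set Q) (P1 P2 : Set Q),
      P1 ⊆ (⋃ i : Fin (ar f), oneStep Γ' (some f)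
              (fun (j : Fin (ar f)) => if j = i then (SP j).2 else (SP j).1)) ∧
      (∀ (i : Fin (ar f)), ∀ q ∈ (SP i).2,
        (P1 ∩ oneStep Γ' (some f) (fun (j : Fin (ar f)) => if j = i then {q} else (SP j).1)).Nonempty) ∧
      ((LhsMatch Rb enc2 (some f) (fun i => (SP i).1) ∧ P2 = {enc (Term.var 0)}) ∨
       (¬ LhsMatch Rb enc2 (some f) (fun i => (SP i).1) ∧ P2 = (∅ : Set Q))) ∧
      ρ = ⟨f, SP, (oneStep Γ' (some f) (fun i => (SP i).1), P1 ∪ P2)⟩ }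

/-- The automaton `𝒟(ℛ)`: final states are the pairs `[S,P]` with `q_r ∈ S` and
`P ⊆ Q_f`. -/
def DAutomaton {F : Type} {ar : F → ℕ} {Q : Type} (Rb : TRS (Option F) (arB ar))
    (Γ' : Set (TARule (Option F) (arB ar) Q))
    (enc enc2 : Term (Option F) (arB ar) → Q) (qr : Q) (Qf : Set Q) :
    TreeAutomaton F ar (Set Q × Set Q) where
  trans := DTrans Rb Γ' enc enc2
  final := { SP | qr ∈ SP.1 ∧ SP.2 ⊆ Qf }

/-! ## Growing approximations -/

/-- `VarRepl t t'` : `t'` is obtained from `t` by replacing occurrences of variables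
by (possibly other) variables. -/
inductive VarRepl {F : Type} {ar : F → ℕ} : Term F ar → Term F ar → Prop
  | var (n m : ℕ) : VarRepl (Term.var n) (Term.var m)
  | app (f : F) (ts ts' : Fin (ar f) → Term F ar) :
      (∀ i, VarRepl (ts i) (ts' i)) → VarRepl (Term.app f ts) (Term.app f ts')

/-- `Rg` is a growing approximation of `R`: a right-linear growing TRS obtained from
`R` by replacing, in each right-hand side, occurrences of variables by variables not
occurring in the corresponding left-hand side. -/
def IsGrowingApprox {F : Type} {ar : F → ℕ} (R Rg : TRS F ar) : Prop :=
  Rg.RightLinear ∧ Rg.Growing ∧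
  (∀ lr ∈ Rg.rules, ∃ lr' ∈ R.rules, lr.1 = lr'.1 ∧ VarRepl lr'.2 lr.2 ∧
      ∀ n ∈ lr.2.vars, n ∉ lr.1.vars) ∧
  (∀ lr ∈ R.rules, ∃ lr' ∈ Rg.rules, lr.1 = lr'.1 ∧ VarRepl lr.2 lr'.2 ∧
      ∀ n ∈ lr'.2.vars, n ∉ lr'.1.vars)

/-! ## The signature `𝓖 = 𝓕 ∪ {f° : f ∈ 𝓕}` -/

/-- The arity function of the signature `𝓕 ∪ {f° : f ∈ 𝓕}` (`inl f` is `f`,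
`inr f` is `f°`). -/
def arC {F : Type} (ar : F → ℕ) : F ⊕ F → ℕ
  | Sum.inl f => ar f
  | Sum.inr f => ar f

/-- The embedding of `𝒯(𝓕)`-terms into terms over `𝓕 ∪ {f° : f ∈ 𝓕}`. -/
def liftC {F : Type} {ar : F → ℕ} : Term F ar → Term (F ⊕ F) (arC ar) :=
  Term.relabel Sum.inl (fun _ => rfl)

/-- `t°`: mark the root symbol of `t`. -/
def circTm {F : Type} {ar : F → ℕ} : Term F ar → Term (F ⊕ F) (arC ar)
  | Term.var n => Term.var n
  | Term.app f ts => Term.app (Sum.inr f) fun i => liftC (ts i)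

/-- A TRS over `𝓕` viewed as a TRS over `𝓕 ∪ {f° : f ∈ 𝓕}`. -/
def TRS.liftC {F : Type} {ar : F → ℕ} (R : TRS F ar) : TRS (F ⊕ F) (arC ar) :=
  R.relabel Sum.inl (fun _ => rfl)

/-- The TRS `𝒮° = 𝒮 ∪ {l° → r | l → r ∈ 𝒮}` over the signature `𝓕 ∪ {f° : f ∈ 𝓕}`. -/
def TRS.circ {F : Type} {ar : F → ℕ} (S : TRS F ar) : TRS (F ⊕ F) (arC ar) where
  rules := S.liftC.rules ∪ (fun lr => (circTm lr.1, _root_.liftC lr.2)) '' S.rules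
  finite := S.liftC.finite.union (S.finite.image _)
  lhs_not_var := by
    rintro lr (h | ⟨lr0, h0, rfl⟩) n hn
    · exact S.liftC.lhs_not_var lr h n hn
    · dsimp only at hn
      cases h1 : lr0.1 with
      | var m => exact absurd h1 (S.lhs_not_var lr0 h0 m)
      | app f ts =>
          rw [h1] at hn
          simp only [circTm] at hn
          cases hn

/-- The transitions added to `ℬ(𝒮°)` to obtain `𝒜_{REDEX_{𝒮°}}`:
`f(⟨l₁⟩,…,⟨lₙ⟩) → q_f` and `f°(⟨l₁⟩,…,⟨lₙ⟩) → q_f` for each left-hand side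
`f(l₁,…,lₙ)` of a rule of `𝒮`. -/
def CircRedexRules {F : Type} {ar : F → ℕ} {Q : Type} (S : TRS F ar)
    (enc : Term (F ⊕ F) (arC ar) → Q) (qf : Q) : Set (TARule (F ⊕ F) (arC ar) Q) :=
  { ρ | ∃ (f : F) (ls : Fin (ar f) → Term F ar) (r : Term F ar),
      (Term.app f ls, r) ∈ S.rules ∧
      (ρ = ⟨Sum.inl f, fun i => enc (stPattern (liftC (ls i))), qf⟩ ∨
       ρ = ⟨Sum.inr f, fun i => enc (stPattern (liftC (ls i))), qf⟩) }

/-! ## The automaton `𝒟'(ℛ,𝒮)` -/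

/-- The data of the construction of `𝒞'_{RS_{𝒮°}}(ℛ)`: the saturated automaton
`𝒞_{RS_{𝒮°}}(ℛ)`, a fresh copy `⟪t⟫` (encoded by `enc2`, with `⟪x⟫ = ⟨x⟩`) of the
states of `ℬ(ℛ)`, and an automaton `𝒞_{REDEX_𝒮}(𝒮)` (transitions `Etrans`, final
states `Qf'`) recognizing the non-`𝒮`-root-stable ground terms of `𝒯(𝓕)`. -/
structure CrsSetup {F : Type} [Fintype F] {ar : F → ℕ} (Q : Type) [Fintype Q]
    (R S : TRS F ar) extends CSetup Q R.liftC (TRS.RSset S.circ) where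
  enc2 : Term (F ⊕ F) (arC ar) → Q
  henc2 : Set.InjOn enc2 (BStateSet R.liftC)
  hx : enc2 (Term.var 0) = enc (Term.var 0)
  hfresh2 : (enc2 '' (BStateSet R.liftC \ {Term.var 0})) ∩
              (QA ∪ enc '' BStateSet R.liftC) = ∅
  Etrans : Set (TARule (F ⊕ F) (arC ar) Q)
  Qf' : Set Q
  hQf' : Qf' ⊆ statesOf Etrans
  hEfresh : statesOf Etrans ∩
      (QA ∪ enc '' BStateSet R.liftC ∪ enc2 '' (BStateSet R.liftC \ {Term.var 0})) = ∅
  hE : ∀ t : Term (F ⊕ F) (arC ar),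
      (t.Ground ∧ ∃ q ∈ Qf', Reaches Etrans t q) ↔
      (∃ s : Term F ar, t = liftC s ∧ s.Ground ∧ ¬ S.RootStable s)

namespace CrsSetup

variable {F : Type} [Fintype F] {ar : F → ℕ} {Q : Type} [Fintype Q] {R S : TRS F ar}

/-- The transition rules `Γ'` of the automaton `𝒞'_{RS_{𝒮°}}(ℛ)`. -/
def Γ' (C : CrsSetup Q R S) : Set (TARule (F ⊕ F) (arC ar) Q) :=
  C.toCSetup.Γsat ∪ BMatch R.liftC C.enc2 ∪ C.Etrans

end CrsSetup

/-- The transition rules of the automaton `𝒟'(ℛ,𝒮)` over `𝓕`, built from the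
transition rules `Γ'` of `𝒞'_{RS_{𝒮°}}(ℛ)`. -/
def DTransRS {F : Type} {ar : F → ℕ} {Q : Type} (Rg : TRS (F ⊕ F) (arC ar))
    (Γ' : Set (TARule (F ⊕ F) (arC ar) Q)) (enc2 : Term (F ⊕ F) (arC ar) → Q) :
    Set (TARule F ar (Set Q × Set Q)) :=
  { ρ | ∃ (f : F) (SP : Fin (ar f) → Set Q × Set Q) (P1 P2 : Set Q),
      P1 ⊆ (⋃ i : Fin (ar f), oneStep Γ' (Sum.inl f)
              (fun (j : Fin (ar f)) => if j = i then (SP j).2 else (SP j).1)) ∧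
      (∀ (i : Fin (ar f)), ∀ q ∈ (SP i).2,
        (P1 ∩ oneStep Γ' (Sum.inl f) (fun (j : Fin (ar f)) => if j = i then {q} else (SP j).1)).Nonempty) ∧
      ((LhsMatch Rg enc2 (Sum.inl f) (fun i => (SP i).1) ∧ P2.Nonempty ∧
          P2 ⊆ oneStep Γ' (Sum.inr f) (fun i => (SP i).1)) ∨
       (¬ LhsMatch Rg enc2 (Sum.inl f) (fun i => (SP i).1) ∧ P2 = (∅ : Set Q))) ∧
      ρ = ⟨f, SP, (oneStep Γ' (Sum.inl f) (fun i => (SP i).1), P1 ∪ P2)⟩ }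

/-- The automaton `𝒟'(ℛ,𝒮)`: final states are the pairs `[S,P]` with
`S ∩ Q_f' ≠ ∅` and `P ⊆ Q_f`. -/
def DAutomatonRS {F : Type} {ar : F → ℕ} {Q : Type} (Rg : TRS (F ⊕ F) (arC ar))
    (Γ' : Set (TARule (F ⊕ F) (arC ar) Q)) (enc2 : Term (F ⊕ F) (arC ar) → Q)
    (Qf' Qf : Set Q) : TreeAutomaton F ar (Set Q × Set Q) where
  trans := DTransRS Rg Γ' enc2
  final := { SP | (SP.1 ∩ Qf').Nonempty ∧ SP.2 ⊆ Qf }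


/-! ## Auxiliary lemmas -/

section AuxBasic

variable {F : Type} {ar : F → ℕ}

lemma ground_app {f : F} {ts : Fin (ar f) → Term F ar} :
    (Term.app f ts).Ground ↔ ∀ i, (ts i).Ground := by
  simp only [Term.Ground, Term.vars, Finset.eq_empty_iff_forall_notMem,
    Finset.mem_biUnion, Finset.mem_univ, true_and, not_exists]
  exact ⟨fun h i n hn => h n i hn, fun h n i hn => h i n hn⟩

lemma not_ground_var {n : ℕ} : ¬ (Term.var n : Term F ar).Ground := by
  simp [Term.Ground, Term.vars]

lemma mem_vars_iff_count {t : Term F ar} {n : ℕ} : n ∈ t.vars ↔ t.count n ≠ 0 := by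
  induction t with
  | var m =>
      constructor
      · intro h; simp only [Term.vars, Finset.mem_singleton] at h; simp [Term.count, h.symm]
      · intro h
        by_cases hm : m = n
        · simp [Term.vars, hm]
        · simp [Term.count, hm] at h
  | app f ts ih =>
      constructor
      · intro h hz
        simp only [Term.vars, Finset.mem_biUnion, Finset.mem_univ, true_and] at h
        obtain ⟨i, hi⟩ := h
        rw [Term.count, Finset.sum_eq_zero_iff] at hz
        exact (ih i).1 hi (hz i (Finset.mem_univ i))
      · intro h
        rw [Term.count, Ne, Finset.sum_eq_zero_iff] at h
        push_neg at h
        obtain ⟨i, _, hi⟩ := h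
        simp only [Term.vars, Finset.mem_biUnion, Finset.mem_univ, true_and]
        exact ⟨i, (ih i).2 hi⟩

lemma linear_arg {f : F} {ts : Fin (ar f) → Term F ar}
    (h : (Term.app f ts).Linear) (i : Fin (ar f)) : (ts i).Linear := by
  intro n
  have := h n
  simp only [Term.count] at this
  exact le_trans (Finset.single_le_sum (f := fun j => (ts j).count n)
    (fun j _ => Nat.zero_le _) (Finset.mem_univ i)) this

lemma linear_vars_unique {f : F} {ts : Fin (ar f) → Term F ar}
    (h : (Term.app f ts).Linear) {n : ℕ} {i j : Fin (ar f)}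
    (hi : n ∈ (ts i).vars) (hj : n ∈ (ts j).vars) : i = j := by
  by_contra hij
  have h1 : 1 ≤ (ts i).count n := Nat.one_le_iff_ne_zero.2 (mem_vars_iff_count.1 hi)
  have h2 : 1 ≤ (ts j).count n := Nat.one_le_iff_ne_zero.2 (mem_vars_iff_count.1 hj)
  have hlin := h n
  simp only [Term.count] at hlin
  have : (ts i).count n + (ts j).count n ≤ ∑ k, (ts k).count n := by
    rw [← Finset.add_sum_erase _ _ (Finset.mem_univ i)]
    exact Nat.add_le_add_left (Finset.single_le_sum (f := fun k => (ts k).count n)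
      (fun k _ => Nat.zero_le _)
      (Finset.mem_erase.2 ⟨fun hji => hij hji.symm, Finset.mem_univ j⟩)) _
  omega

lemma subtermAt_append {p q : List ℕ} {u t s : Term F ar}
    (h1 : u.subtermAt p = some t) (h2 : t.subtermAt q = some s) :
    u.subtermAt (p ++ q) = some s := by
  induction p generalizing u with
  | nil => simp only [Term.subtermAt, Option.some.injEq] at h1; subst h1; simpa using h2
  | cons i p ih =>
      cases u with
      | var m => simp [Term.subtermAt] at h1
      | app f ts =>
          simp only [Term.subtermAt, List.cons_append] at h1 ⊢
          split at h1
          · rw [dif_pos ‹_›]; exact ih h1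
          · exact absurd h1 (by simp)

lemma isSubtermOf_trans {s t u : Term F ar} (h1 : s.IsSubtermOf t) (h2 : t.IsSubtermOf u) :
    s.IsSubtermOf u := by
  obtain ⟨p, hp⟩ := h1; obtain ⟨p', hp'⟩ := h2
  exact ⟨p' ++ p, subtermAt_append hp' hp⟩

lemma isSubtermOf_self (t : Term F ar) : t.IsSubtermOf t := ⟨[], by cases t <;> rfl⟩

lemma isSubtermOf_arg {f : F} {ts : Fin (ar f) → Term F ar} (i : Fin (ar f)) :
    (ts i).IsSubtermOf (Term.app f ts) := by
  refine ⟨[i.1], ?_⟩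
  simp only [Term.subtermAt]
  rw [dif_pos i.2]

lemma mem_vars_app {f : F} {ts : Fin (ar f) → Term F ar} {i : Fin (ar f)} {n : ℕ}
    (hn : n ∈ (ts i).vars) : n ∈ (Term.app f ts).vars := by
  simp only [Term.vars, Finset.mem_biUnion]
  exact ⟨i, Finset.mem_univ i, hn⟩

lemma subst_congr {t : Term F ar} {σ σ' : ℕ → Term F ar}
    (h : ∀ n ∈ t.vars, σ n = σ' n) : t.subst σ = t.subst σ' := by
  induction t with
  | var n => exact h n (by simp [Term.vars])
  | app f ts ih =>
      simp only [Term.subst, Term.app.injEq, heq_eq_eq, true_and]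
      funext i
      exact ih i fun n hn => h n (mem_vars_app hn)

lemma ground_subst {t : Term F ar} {σ : ℕ → Term F ar}
    (h : ∀ n ∈ t.vars, (σ n).Ground) : (t.subst σ).Ground := by
  induction t with
  | var n => exact h n (by simp [Term.vars])
  | app f ts ih =>
      rw [Term.subst, ground_app]
      exact fun i => ih i fun n hn => h n (mem_vars_app hn)

lemma ground_of_subst_ground {t : Term F ar} {σ : ℕ → Term F ar}
    (h : (t.subst σ).Ground) : ∀ n ∈ t.vars, (σ n).Ground := by
  induction t with
  | var n => intro m hm; simp only [Term.vars, Finset.mem_singleton] at hm; subst hm; exact h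
  | app f ts ih =>
      intro n hn
      simp only [Term.vars, Finset.mem_biUnion, Finset.mem_univ, true_and] at hn
      obtain ⟨i, hi⟩ := hn
      rw [Term.subst, ground_app] at h
      exact ih i (h i) n hi

end AuxBasic

section AuxRelabel

variable {F G : Type} {ar : F → ℕ} {arG : G → ℕ} {φ : F → G} {hφ : ∀ f, arG (φ f) = ar f}

lemma vars_relabel (t : Term F ar) : (t.relabel φ hφ).vars = t.vars := by
  induction t with
  | var n => rfl
  | app f ts ih =>
      simp only [Term.relabel, Term.vars]
      ext n
      simp only [Finset.mem_biUnion, Finset.mem_univ, true_and]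
      constructor
      · rintro ⟨i, hi⟩
        rw [ih (Fin.cast (hφ f) i)] at hi
        exact ⟨Fin.cast (hφ f) i, hi⟩
      · rintro ⟨j, hj⟩
        refine ⟨Fin.cast (hφ f).symm j, ?_⟩
        rw [ih]
        exact hj

lemma count_relabel (t : Term F ar) (n : ℕ) : (t.relabel φ hφ).count n = t.count n := by
  induction t with
  | var m => rfl
  | app f ts ih =>
      simp only [Term.relabel, Term.count]
      rw [Fintype.sum_equiv (finCongr (hφ f)) _ (fun j => (ts j).count n)
        (fun i => ih (Fin.cast (hφ f) i))]

lemma subst_relabel (t : Term F ar) (σ : ℕ → Term F ar) :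
    (t.subst σ).relabel φ hφ = (t.relabel φ hφ).subst (fun n => (σ n).relabel φ hφ) := by
  induction t with
  | var n => rfl
  | app f ts ih =>
      simp only [Term.subst, Term.relabel, Term.app.injEq, heq_eq_eq, true_and]
      funext i
      exact ih (Fin.cast (hφ f) i)

end AuxRelabel

section AuxLiftB

variable {F : Type} {ar : F → ℕ}

lemma liftB_app {f : F} {ts : Fin (ar f) → Term F ar} :
    liftB (Term.app f ts) = Term.app (some f) (fun i => liftB (ts i)) := rfl

lemma ground_liftB {t : Term F ar} : (liftB t).Ground ↔ t.Ground := by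
  simp only [Term.Ground]
  rw [show (liftB t).vars = t.vars from vars_relabel t]

lemma liftB_subst (t : Term F ar) (σ : ℕ → Term F ar) :
    liftB (t.subst σ) = (liftB t).subst (fun n => liftB (σ n)) :=
  subst_relabel t σ

lemma liftB_leftLinear {R : TRS F ar} (h : R.LeftLinear) : R.liftB.LeftLinear := by
  rintro lr ⟨lr0, h0, rfl⟩ n
  dsimp only
  refine (count_relabel (arG := arB ar) (φ := some) (hφ := fun _ => rfl) lr0.1 n).trans_le ?_
  exact h lr0 h0 n

lemma liftB_growing {R : TRS F ar} (h : R.Growing) : R.liftB.Growing := by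
  rintro lr ⟨lr0, h0, rfl⟩ n hn1 hn2 g ts' heq i hni
  dsimp only at heq hn1 hn2 ⊢
  replace hn1 := (congrArg (n ∈ ·) (vars_relabel (arG := arB ar) (φ := some) (hφ := fun _ => rfl) lr0.1)).mp hn1
  replace hn2 := (congrArg (n ∈ ·) (vars_relabel (arG := arB ar) (φ := some) (hφ := fun _ => rfl) lr0.2)).mp hn2
  cases hl : lr0.1 with
  | var m => exact absurd hl (R.lhs_not_var lr0 h0 m)
  | app f0 ts0 =>
      rw [hl] at heq
      replace heq : Term.app (some f0) (fun i => liftB (ts0 i)) = Term.app g ts' := heq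
      cases heq
      rw [show (liftB (ts0 i)).vars = (ts0 i).vars from vars_relabel _] at hni
      show liftB (ts0 i) = Term.var n
      rw [show ts0 i = Term.var n from h lr0 h0 n hn1 hn2 f0 ts0 hl i hni]
      rfl

end AuxLiftB

section AuxSR

variable {F : Type} {ar : F → ℕ} {R : TRS F ar}

lemma SR_subterm {t s : Term F ar} (h : t ∈ SR R) (hs : s.IsSubtermOf t) : s ∈ SR R := by
  obtain ⟨lr, hlr, f, ts, heq, i, hsub⟩ := h
  exact ⟨lr, hlr, f, ts, heq, i, isSubtermOf_trans hs hsub⟩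

lemma SR_arg {f : F} {ts : Fin (ar f) → Term F ar} (h : Term.app f ts ∈ SR R)
    (i : Fin (ar f)) : ts i ∈ SR R :=
  SR_subterm h (isSubtermOf_arg i)

lemma SR_of_lhs_arg {f : F} {ls : Fin (ar f) → Term F ar} {r : Term F ar}
    (h : (Term.app f ls, r) ∈ R.rules) (i : Fin (ar f)) : ls i ∈ SR R :=
  ⟨(Term.app f ls, r), h, f, ls, rfl, i, isSubtermOf_self _⟩

lemma var0_mem_BStateSet : (Term.var 0 : Term F ar) ∈ BStateSet R := Or.inr rfl

lemma stPattern_mem_BStateSet {t : Term F ar} (h : t ∈ SR R) :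
    stPattern t ∈ BStateSet R := Or.inl ⟨t, h, rfl⟩

lemma stPattern_idem (t : Term F ar) : stPattern (stPattern t) = stPattern t := by
  cases t <;> rfl

lemma mem_SR_of_pattern_mem {f : F} {ts : Fin (ar f) → Term F ar}
    (h : stPattern (Term.app f ts) ∈ BStateSet R) : Term.app f ts ∈ SR R := by
  rcases h with ⟨t0, ht0, hp⟩ | h
  · cases t0 with
    | var m => exact absurd hp (by intro hc; simp [stPattern] at hc)
    | app g us =>
        rw [show stPattern (Term.app g us) = Term.app g us from rfl,
          show stPattern (Term.app f ts) = Term.app f ts from rfl] at hp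
        rwa [← hp]
  · exact absurd h (by intro hc; simp [stPattern] at hc)

end AuxSR

/-- `Matches v l` : `v` can be obtained from `l` by replacing each variable by a term. -/
inductive Matches {F : Type} {ar : F → ℕ} : Term F ar → Term F ar → Prop
  | var (u : Term F ar) (n : ℕ) : Matches u (Term.var n)
  | app {f : F} {us ts : Fin (ar f) → Term F ar} :
      (∀ i, Matches (us i) (ts i)) → Matches (Term.app f us) (Term.app f ts)

section AuxMatches

variable {F : Type} {ar : F → ℕ}

lemma matches_subst {l v : Term F ar} (hm : Matches v l) (hl : l.Linear)
    (τ0 : ℕ → Term F ar) :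
    ∃ τ, v = l.subst τ ∧ ∀ n, n ∉ l.vars → τ n = τ0 n := by
  classical
  induction hm generalizing τ0 with
  | var u n =>
      refine ⟨Function.update τ0 n u, by simp [Term.subst], ?_⟩
      intro m hm'
      simp only [Term.vars, Finset.mem_singleton] at hm'
      exact Function.update_of_ne hm' _ _
  | @app f us ts hts ih =>
      choose τs hτs hτs' using fun i => ih i (linear_arg hl i) τ0
      refine ⟨fun n => if h : ∃ i, n ∈ (ts i).vars then τs h.choose n else τ0 n, ?_, ?_⟩
      · simp only [Term.subst, Term.app.injEq, heq_eq_eq, true_and]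
        funext i
        rw [hτs i]
        refine subst_congr fun n hn => ?_
        have hex : ∃ j, n ∈ (ts j).vars := ⟨i, hn⟩
        show τs i n = if h : ∃ j, n ∈ (ts j).vars then τs h.choose n else τ0 n
        rw [dif_pos hex, linear_vars_unique hl hex.choose_spec hn]
      · intro n hn
        have hne : ¬ ∃ i, n ∈ (ts i).vars := fun ⟨i, hi⟩ => hn (mem_vars_app hi)
        exact dif_neg hne

end AuxMatches

section AuxRewrites

variable {F : Type} {ar : F → ℕ} {R : Set (Term F ar × Term F ar)}

lemma subtermAt_nil (t : Term F ar) : t.subtermAt [] = some t := by cases t <;> rfl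

lemma replaceAt_nil (t u : Term F ar) : t.replaceAt [] u = some u := by cases t <;> rfl

lemma rewrites_root {l r : Term F ar} {σ : ℕ → Term F ar} (h : (l, r) ∈ R) :
    Rewrites R (l.subst σ) (r.subst σ) :=
  ⟨[], l, r, σ, h, subtermAt_nil _, replaceAt_nil _ _⟩

lemma rewrites_update {f : F} {ts : Fin (ar f) → Term F ar} {j : Fin (ar f)}
    {a b : Term F ar} (h : Rewrites R a b) :
    Rewrites R (Term.app f (Function.update ts j a))
      (Term.app f (Function.update ts j b)) := by
  obtain ⟨p, l, r, σ, hR, h1, h2⟩ := h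
  refine ⟨j.1 :: p, l, r, σ, hR, ?_, ?_⟩
  · simp only [Term.subtermAt]
    rw [dif_pos j.2, show (⟨j.1, j.2⟩ : Fin (ar f)) = j from rfl, Function.update_self]
    exact h1
  · simp only [Term.replaceAt]
    rw [dif_pos j.2, show (⟨j.1, j.2⟩ : Fin (ar f)) = j from rfl, Function.update_self, h2]
    simp [Function.update_idem]

lemma rstar_update {f : F} (ts : Fin (ar f) → Term F ar) (j : Fin (ar f))
    {a b : Term F ar} (h : RewritesStar R a b) :
    RewritesStar R (Term.app f (Function.update ts j a))
      (Term.app f (Function.update ts j b)) :=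
  Relation.ReflTransGen.lift (fun x => Term.app f (Function.update ts j x))
    (fun _ _ hab => rewrites_update hab) _ _ h

lemma rstar_app {f : F} {us vs : Fin (ar f) → Term F ar}
    (h : ∀ i, RewritesStar R (us i) (vs i)) :
    RewritesStar R (Term.app f us) (Term.app f vs) := by
  classical
  have key : ∀ I : Finset (Fin (ar f)),
      RewritesStar R (Term.app f us) (Term.app f fun i => if i ∈ I then vs i else us i) := by
    intro I
    induction I using Finset.induction_on with
    | empty =>
        simp only [Finset.notMem_empty, if_false]
        exact Relation.ReflTransGen.refl
    | @insert j I hj ih =>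
        refine ih.trans ?_
        have e1 : Term.app f (fun i => if i ∈ I then vs i else us i)
            = Term.app f (Function.update (fun i => if i ∈ I then vs i else us i) j (us j)) := by
          congr 1
          funext i
          by_cases hij : i = j
          · subst hij; simp [hj]
          · rw [Function.update_of_ne hij]
        have e2 : (fun i => if i ∈ insert j I then vs i else us i)
            = Function.update (fun i => if i ∈ I then vs i else us i) j (vs j) := by
          funext i
          by_cases hij : i = j
          · subst hij; simp
          · rw [Function.update_of_ne hij]
            simp [hij]
        rw [e1, e2]
        exact rstar_update _ _ (h j)
  simpa using key Finset.univ

end AuxRewrites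

section AuxReaches

variable {F : Type} {ar : F → ℕ} {Q : Type}

lemma reaches_mono {Γ Γ' : Set (TARule F ar Q)} (h : Γ ⊆ Γ') {t : Term F ar} {q : Q}
    (ht : Reaches Γ t q) : Reaches Γ' t q := by
  induction ht with
  | app hts hρ ih => exact Reaches.app ih (h hρ)

lemma reaches_ground {Γ : Set (TARule F ar Q)} {t : Term F ar} {q : Q}
    (ht : Reaches Γ t q) : t.Ground := by
  induction ht with
  | app hts hρ ih => exact ground_app.2 ih

lemma reaches_subst {Γ : Set (TARule F ar Q)} {θ : ℕ → Q} {r : Term F ar} {q : Q}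
    (h : ReachesT Γ θ r q) {σ : ℕ → Term F ar}
    (hσ : ∀ n ∈ r.vars, Reaches Γ (σ n) (θ n)) : Reaches Γ (r.subst σ) q := by
  induction h with
  | var n => exact hσ n (by simp [Term.vars])
  | @app f ts qs q hts hρ ih =>
      exact Reaches.app (fun i => ih i fun n hn => hσ n (mem_vars_app hn)) hρ

lemma reaches_directed {Γs : ℕ → Set (TARule F ar Q)} (mono : Monotone Γs)
    {t : Term F ar} {q : Q} (h : Reaches (⋃ n, Γs n) t q) : ∃ k, Reaches (Γs k) t q := by
  induction h with
  | @app f ts qs q hts hρ ih =>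
      choose ks hks using ih
      obtain ⟨k0, hk0⟩ := Set.mem_iUnion.1 hρ
      refine ⟨max k0 (Finset.univ.sup ks), Reaches.app (fun i => reaches_mono (mono ?_) (hks i))
        (mono (le_max_left _ _) hk0)⟩
      exact le_max_of_le_right (Finset.le_sup (Finset.mem_univ i))

end AuxReaches

section AuxB

variable {G : Type} {arG : G → ℕ} {Q : Type} {Rg : TRS G arG}

lemma ground_reaches_x {Δ : Set (TARule G arG Q)} {e' : Term G arG → Q}
    (hBP : BProp e' ⊆ Δ) {v : Term G arG} (hv : v.Ground) :
    Reaches Δ v (e' (Term.var 0)) := by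
  induction v with
  | var n => exact absurd hv not_ground_var
  | app f ts ih =>
      exact Reaches.app (fun i => ih i (ground_app.1 hv i)) (hBP ⟨f, rfl⟩)

lemma instance_reaches {Δ : Set (TARule G arG Q)} {e e' : Term G arG → Q}
    (hBM : BMatch Rg e ⊆ Δ) (hBP : BProp e' ⊆ Δ)
    (hx : e (Term.var 0) = e' (Term.var 0)) :
    ∀ t : Term G arG, stPattern t ∈ BStateSet Rg → ∀ σ : ℕ → Term G arG,
      (∀ n ∈ t.vars, (σ n).Ground) → Reaches Δ (t.subst σ) (e (stPattern t)) := by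
  intro t
  induction t with
  | var n =>
      intro _ σ hσ
      rw [show stPattern (Term.var n : Term G arG) = Term.var 0 from rfl, hx]
      exact ground_reaches_x hBP (hσ n (by simp [Term.vars]))
  | app f ts ih =>
      intro ht σ hσ
      have hSR : Term.app f ts ∈ SR Rg := mem_SR_of_pattern_mem ht
      rw [show stPattern (Term.app f ts) = Term.app f ts from rfl]
      simp only [Term.subst]
      refine Reaches.app (qs := fun i => e (stPattern (ts i))) (fun i => ?_)
        (hBM ⟨f, ts, hSR, rfl⟩)
      exact ih i (stPattern_mem_BStateSet (SR_arg hSR i)) σ (fun n hn => hσ n (mem_vars_app hn))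

lemma btrans_target {e : Term G arG → Q} {ρ : TARule G arG Q} (hρ : ρ ∈ BTrans Rg e) :
    ρ.2.2 ∈ e '' BStateSet Rg ∧ ∀ i, ρ.2.1 i ∈ e '' BStateSet Rg := by
  rcases hρ with ⟨f, ts, hSR, rfl⟩ | ⟨f, rfl⟩
  · exact ⟨⟨stPattern (Term.app f ts), stPattern_mem_BStateSet hSR, rfl⟩,
      fun i => ⟨stPattern (ts i), stPattern_mem_BStateSet (SR_arg hSR i), rfl⟩⟩
  · exact ⟨⟨_, var0_mem_BStateSet, rfl⟩, fun i => ⟨_, var0_mem_BStateSet, rfl⟩⟩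

lemma reaches_pattern_matches {e : Term G arG → Q} (henc : Set.InjOn e (BStateSet Rg)) :
    ∀ t : Term G arG, stPattern t ∈ BStateSet Rg → ∀ v : Term G arG,
      Reaches (BTrans Rg e) v (e (stPattern t)) → Matches v t := by
  intro t
  induction t with
  | var n => exact fun _ v _ => Matches.var v n
  | app f ts ih =>
      intro ht v hv
      have hSR : Term.app f ts ∈ SR Rg := mem_SR_of_pattern_mem ht
      cases hv with
      | @app g us qs _ hus hρ =>
          rcases hρ with ⟨f', ts', hSR', hrule⟩ | ⟨f', hrule⟩
          · injection hrule with h1 h2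
            subst h1
            rw [heq_eq_eq] at h2
            injection h2 with h3 h4
            have h5 : Term.app g ts' = Term.app f ts :=
              henc (stPattern_mem_BStateSet hSR') ht h4.symm
            injection h5 with h6 h7
            subst h6
            rw [heq_eq_eq] at h7
            rw [h7] at h3
            refine Matches.app fun i => ?_
            have hq : qs i = e (stPattern (ts i)) := congrFun h3 i
            exact ih i (stPattern_mem_BStateSet (SR_arg hSR i)) (us i) (hq ▸ hus i)
          · injection hrule with h1 h2
            subst h1
            rw [heq_eq_eq] at h2
            injection h2 with h3 h4
            exact absurd (henc ht var0_mem_BStateSet h4) (by intro hc; simp [stPattern] at hc)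

lemma pattern_of_mem {p : Term G arG} (hp : p ∈ BStateSet Rg) : stPattern p = p := by
  rcases hp with ⟨t, _, rfl⟩ | hp
  · exact stPattern_idem t
  · rw [Set.mem_singleton_iff] at hp
    subst hp
    rfl

lemma reachesT_target {Γ : Set (TARule G arG Q)} {θ : ℕ → Q} {r : Term G arG} {q : Q}
    (h : ReachesT Γ θ r q) : (∃ n ∈ r.vars, q = θ n) ∨ ∃ ρ ∈ Γ, ρ.2.2 = q := by
  cases h with
  | var n => exact Or.inl ⟨n, by simp [Term.vars], rfl⟩
  | app hts hρ => exact Or.inr ⟨_, hρ, rfl⟩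

end AuxB

namespace CSetup

variable {G : Type} [Fintype G] {arG : G → ℕ} {Q : Type} [Fintype Q]
  {Rg : TRS G arG} {T : Set (Term G arG)} (C : CSetup Q Rg T)

lemma bmatch_subset_gamma0 : BMatch Rg C.enc ⊆ C.Γ0 := fun ρ h => Or.inr (Or.inl h)

lemma bprop_subset_gamma0 : BProp C.enc ⊆ C.Γ0 := fun ρ h => Or.inr (Or.inr h)

lemma gamma0_states : ∀ ρ ∈ C.Γ0, ρ.2.2 ∈ C.Qstates ∧ ∀ i, ρ.2.1 i ∈ C.Qstates := by
  rintro ρ (hρ | hρ)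
  · obtain ⟨h1, h2⟩ := C.hAstates ρ hρ
    exact ⟨Or.inl h1, fun i => Or.inl (h2 i)⟩
  · obtain ⟨h1, h2⟩ := btrans_target hρ
    exact ⟨Or.inr h1, fun i => Or.inr (h2 i)⟩

lemma satStep_states {Γ : Set (TARule G arG Q)}
    (hΓ : ∀ ρ ∈ Γ, ρ.2.2 ∈ C.Qstates ∧ ∀ i, ρ.2.1 i ∈ C.Qstates) :
    ∀ ρ ∈ satStep Rg C.enc C.Qstates Γ, ρ.2.2 ∈ C.Qstates ∧ ∀ i, ρ.2.1 i ∈ C.Qstates := by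
  rintro ρ (hρ | ⟨f, ls, r, θ, q, hrule, hθ, hr, rfl⟩)
  · exact hΓ ρ hρ
  · constructor
    · rcases reachesT_target hr with ⟨n, hn, hq⟩ | ⟨ρ', hρ', hq⟩
      · rw [show (⟨f, fun i => satArg C.enc θ r.vars (ls i), q⟩ : TARule G arG Q).2.2 = q
          from rfl, hq]
        exact hθ n hn
      · rw [show (⟨f, fun i => satArg C.enc θ r.vars (ls i), q⟩ : TARule G arG Q).2.2 = q
          from rfl, ← hq]
        exact (hΓ ρ' hρ').1
    · intro i
      show satArg C.enc θ r.vars (ls i) ∈ C.Qstates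
      cases hls : ls i with
      | var n =>
          show (if n ∈ r.vars then θ n else C.enc (Term.var 0)) ∈ C.Qstates
          by_cases hn : n ∈ r.vars
          · rw [if_pos hn]; exact hθ n hn
          · rw [if_neg hn]; exact Or.inr ⟨_, var0_mem_BStateSet, rfl⟩
      | app g2 ts2 =>
          show C.enc (Term.app g2 ts2) ∈ C.Qstates
          have hSRi := SR_of_lhs_arg hrule i
          rw [hls] at hSRi
          exact Or.inr ⟨Term.app g2 ts2, stPattern_mem_BStateSet hSRi, rfl⟩

lemma satIter_states (k : ℕ) :
    ∀ ρ ∈ (satStep Rg C.enc C.Qstates)^[k] C.Γ0,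
      ρ.2.2 ∈ C.Qstates ∧ ∀ i, ρ.2.1 i ∈ C.Qstates := by
  induction k with
  | zero => exact C.gamma0_states
  | succ k ih =>
      rw [Function.iterate_succ_apply']
      exact C.satStep_states ih

lemma satIter_mono : Monotone (fun k => (satStep Rg C.enc C.Qstates)^[k] C.Γ0) := by
  refine monotone_nat_of_le_succ fun k => ?_
  rw [Function.iterate_succ_apply']
  exact Set.subset_union_left

lemma gamma0_subset_iter (k : ℕ) : C.Γ0 ⊆ (satStep Rg C.enc C.Qstates)^[k] C.Γ0 :=
  C.satIter_mono (Nat.zero_le k)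

lemma acc_gamma0 {q : Q} (hq : q ∈ C.Qstates) : ∃ g, Reaches C.Γ0 g q := by
  rcases hq with hq | ⟨p, hp, rfl⟩
  · obtain ⟨s, _, hs⟩ := C.hacc q hq
    exact ⟨s, reaches_mono Set.subset_union_left hs⟩
  · obtain ⟨g0, hg0⟩ := C.hground
    refine ⟨p.subst (fun _ => g0), ?_⟩
    have h := instance_reaches C.bmatch_subset_gamma0 C.bprop_subset_gamma0 rfl p
      (by rwa [pattern_of_mem hp]) (fun _ => g0) (fun _ _ => hg0)
    rwa [pattern_of_mem hp] at h

lemma mix {u : Term G arG} {q : Q} (h : Reaches C.Γ0 u q) :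
    (q ∈ C.QA → Reaches C.A.trans u q) ∧
    (q ∈ C.enc '' BStateSet Rg → Reaches (BTrans Rg C.enc) u q) := by
  induction h with
  | @app f ts qs q hts hρ ih =>
      rcases hρ with hρ | hρ
      · have hA : Reaches C.A.trans (Term.app f ts) q :=
          Reaches.app (fun i => (ih i).1 ((C.hAstates _ hρ).2 i)) hρ
        exact ⟨fun _ => hA, fun hq => (C.hshared q ⟨(C.hAstates _ hρ).1, hq⟩ _).1 hA⟩
      · have hB : Reaches (BTrans Rg C.enc) (Term.app f ts) q :=
          Reaches.app (fun i => (ih i).2 ((btrans_target hρ).2 i)) hρ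
        exact ⟨fun hq => (C.hshared q ⟨hq, (btrans_target hρ).1⟩ _).2 hB, fun _ => hB⟩

lemma claim (hll : Rg.LeftLinear) (hgr : Rg.Growing) :
    ∀ k, ∀ u q, Reaches ((satStep Rg C.enc C.Qstates)^[k] C.Γ0) u q →
      ∃ v, RewritesStar Rg.rules u v ∧ Reaches C.Γ0 v q := by
  intro k
  induction k with
  | zero => exact fun u q h => ⟨u, Relation.ReflTransGen.refl, h⟩
  | succ k IH =>
      intro u q h
      rw [Function.iterate_succ_apply'] at h
      induction h with
      | @app g us qs q hus hρ ihInner =>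
          choose vs hvs hvs0 using ihInner
          rcases hρ with hρ | ⟨f, ls, r, θ, q', hrule, hθ, hr, heq⟩
          · have hrun : Reaches ((satStep Rg C.enc C.Qstates)^[k] C.Γ0) (Term.app g vs) q :=
              Reaches.app (fun i => reaches_mono (C.gamma0_subset_iter k) (hvs0 i)) hρ
            obtain ⟨w, hw1, hw2⟩ := IH _ _ hrun
            exact ⟨w, (rstar_app hvs).trans hw1, hw2⟩
          · injection heq with h1 h2
            subst h1
            rw [heq_eq_eq] at h2
            injection h2 with h3 h4
            subst h4
            have hmatch : ∀ i, Matches (vs i) (ls i) := by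
              intro i
              cases hls : ls i with
              | var n => exact Matches.var _ n
              | app f2 ts2 =>
                  have hSRi : Term.app f2 ts2 ∈ SR Rg := by
                    have := SR_of_lhs_arg hrule i; rwa [hls] at this
                  have hq : qs i = C.enc (Term.app f2 ts2) := by
                    rw [congrFun h3 i, hls]; rfl
                  have hv0 : Reaches C.Γ0 (vs i) (C.enc (Term.app f2 ts2)) := hq ▸ hvs0 i
                  have hvB : Reaches (BTrans Rg C.enc) (vs i) (C.enc (Term.app f2 ts2)) :=
                    (C.mix hv0).2 ⟨Term.app f2 ts2, stPattern_mem_BStateSet hSRi, rfl⟩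
                  exact reaches_pattern_matches C.henc (Term.app f2 ts2)
                    (stPattern_mem_BStateSet hSRi) (vs i) hvB
            have hlsl : (Term.app g ls).Linear := hll _ hrule
            classical
            have hacc' : ∀ n, ∃ gnd : Term G arG, n ∈ r.vars → Reaches C.Γ0 gnd (θ n) := by
              intro n
              by_cases hn : n ∈ r.vars
              · obtain ⟨gnd, hg⟩ := C.acc_gamma0 (hθ n hn)
                exact ⟨gnd, fun _ => hg⟩
              · exact ⟨Term.var 0, fun hc => absurd hc hn⟩
            choose τ0 hτ0 using hacc'
            obtain ⟨τ, hτ1, hτ2⟩ := matches_subst (Matches.app hmatch) hlsl τ0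
            have hstep : Rewrites Rg.rules (Term.app g vs) (r.subst τ) := by
              rw [hτ1]; exact rewrites_root hrule
            simp only [Term.subst] at hτ1
            injection hτ1 with _ hτ1'
            have hrτ : Reaches ((satStep Rg C.enc C.Qstates)^[k] C.Γ0) (r.subst τ) q := by
              refine reaches_subst hr fun n hn => ?_
              by_cases hnl : n ∈ (Term.app g ls).vars
              · have hex : ∃ i, n ∈ (ls i).vars := by
                  simpa only [Term.vars, Finset.mem_biUnion, Finset.mem_univ, true_and]
                    using hnl
                obtain ⟨i, hi⟩ := hex
                have hlsvar : ls i = Term.var n := hgr _ hrule n hnl hn g ls rfl i hi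
                have hveq : vs i = τ n := by
                  rw [congrFun hτ1' i, hlsvar]; rfl
                have hqθ : qs i = θ n := by
                  rw [congrFun h3 i, hlsvar]
                  show (if n ∈ r.vars then θ n else C.enc (Term.var 0)) = θ n
                  rw [if_pos hn]
                rw [← hveq]
                exact reaches_mono (C.gamma0_subset_iter k) (hqθ ▸ hvs0 i)
              · rw [hτ2 n hnl]
                exact reaches_mono (C.gamma0_subset_iter k) (hτ0 n hn)
            obtain ⟨w, hw1, hw2⟩ := IH _ _ hrτ
            exact ⟨w, ((rstar_app hvs).trans (Relation.ReflTransGen.single hstep)).trans hw1,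
              hw2⟩

lemma claim_sat (hll : Rg.LeftLinear) (hgr : Rg.Growing) {u : Term G arG} {q : Q}
    (h : Reaches C.Γsat u q) :
    ∃ v, RewritesStar Rg.rules u v ∧ Reaches C.Γ0 v q := by
  obtain ⟨k, hk⟩ := reaches_directed C.satIter_mono h
  exact C.claim hll hgr k u q hk

end CSetup

namespace CSetup

variable {G : Type} [Fintype G] {arG : G → ℕ} {Q : Type} [Fintype Q]
  {Rg : TRS G arG} {T : Set (Term G arG)} (C : CSetup Q Rg T)

lemma gamma0_subset_sat : C.Γ0 ⊆ C.Γsat := fun ρ h => Set.mem_iUnion.2 ⟨0, h⟩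

end CSetup

namespace CpSetup

variable {G : Type} [Fintype G] {arG : G → ℕ} {Q : Type} [Fintype Q]
  {Rg : TRS G arG} {T : Set (Term G arG)} (C : CpSetup Q Rg T)

lemma satGamma_states :
    ∀ ρ ∈ C.toCSetup.Γsat, ρ.2.2 ∈ C.Qstates ∧ ∀ i, ρ.2.1 i ∈ C.Qstates := by
  intro ρ hρ
  obtain ⟨k, hk⟩ := Set.mem_iUnion.1 hρ
  exact C.toCSetup.satIter_states k ρ hk

lemma gammap_to_sat {u : Term G arG} {q : Q} (h : Reaches C.Γ' u q) :
    q ∈ C.Qstates → Reaches C.toCSetup.Γsat u q := by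
  induction h with
  | @app f ts qs q hts hρ ih =>
      intro hq
      have hsat : (⟨f, qs, q⟩ : TARule G arG Q) ∈ C.toCSetup.Γsat := by
        rcases hρ with ((hρ | hρ) | hρ) | hρ
        · exact hρ
        · exfalso
          obtain ⟨f2, ts2, hSR2, hrule⟩ := hρ
          injection hrule with h1 h2
          subst h1
          rw [heq_eq_eq] at h2
          injection h2 with h3 h4
          have hmem : q ∈ C.enc2 '' (BStateSet Rg \ {Term.var 0}) :=
            ⟨Term.app f ts2, ⟨stPattern_mem_BStateSet hSR2,
              by intro hc; cases hc⟩, h4.symm⟩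
          exact Set.eq_empty_iff_forall_notMem.1 C.hfresh q ⟨Or.inl hmem, hq⟩
        · exfalso
          obtain ⟨f2, ls2, r2, hrule2, hrule⟩ := hρ
          injection hrule with h1 h2
          subst h1
          rw [heq_eq_eq] at h2
          injection h2 with h3 h4
          exact Set.eq_empty_iff_forall_notMem.1 C.hfresh q ⟨Or.inr h4, hq⟩
        · exfalso
          obtain ⟨f2, j, hrule⟩ := hρ
          injection hrule with h1 h2
          subst h1
          rw [heq_eq_eq] at h2
          injection h2 with h3 h4
          exact Set.eq_empty_iff_forall_notMem.1 C.hfresh q ⟨Or.inr h4, hq⟩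
      exact Reaches.app (fun i => ih i ((C.satGamma_states _ hsat).2 i)) hsat

end CpSetup

section DLemma

variable {F : Type} [Fintype F] {ar : F → ℕ} {Q : Type} [Fintype Q]
  {R : TRS F ar} {T : Set (Term (Option F) (arB ar))} (C : CpSetup Q R.liftB T)

lemma cp_bprop_subset : BProp C.enc ⊆ C.Γ' := fun ρ h =>
  Or.inl (Or.inl (Or.inl (C.toCSetup.gamma0_subset_sat (C.toCSetup.bprop_subset_gamma0 h))))

lemma cp_bmatch2_subset : BMatch R.liftB C.enc2 ⊆ C.Γ' := fun ρ h => Or.inl (Or.inl (Or.inr h))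

lemma bullet_reaches : Reaches C.Γ' (bulletTm (ar := ar)) (C.enc (Term.var 0)) :=
  Reaches.app (qs := fun _ => C.enc (Term.var 0)) (fun i => i.elim0)
    (cp_bprop_subset C ⟨none, by funext ; rfl⟩)

lemma dlemma {s : Term F ar} {SP : Set Q × Set Q}
    (h : Reaches (DTrans R.liftB C.Γ' C.enc C.enc2) s SP) :
    s.Ground →
    SP.1 = dn C.Γ' (liftB s) ∧
    ∀ p, R.RedexPos s p → ∃ q ∈ SP.2, ∃ u,
      (liftB s).replaceAt p bulletTm = some u ∧ Reaches C.Γ' u q := by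
  induction h with
  | @app f ts qs q hts hρ ih =>
      intro hs
      have hg : ∀ i, (ts i).Ground := ground_app.1 hs
      obtain ⟨f', SP', P1, P2, hP1sub, hP1cov, hP2, heq⟩ := hρ
      injection heq with h1 h2
      subst h1
      rw [heq_eq_eq] at h2
      injection h2 with h3 h4
      subst h3
      have hq1 : q.1 = oneStep C.Γ' (some f) (fun i => (qs i).1) := congrArg Prod.fst h4
      have hq2 : q.2 = P1 ∪ P2 := congrArg Prod.snd h4
      constructor
      · rw [hq1, liftB_app]
        ext q0
        constructor
        · rintro ⟨qa, hqa, hrule⟩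
          refine Reaches.app (fun i => ?_) hrule
          have hm : qa i ∈ (qs i).1 := hqa i
          rw [(ih i (hg i)).1] at hm
          exact hm
        · intro hq0
          cases hq0 with
          | app hqa hrule =>
              refine ⟨_, fun i => ?_, hrule⟩
              show _ ∈ (qs i).1
              rw [(ih i (hg i)).1]
              exact hqa i
      · intro p hp
        cases p with
        | nil =>
            obtain ⟨u0, hu0, lr, hlr, σ, hσ⟩ := hp
            rw [subtermAt_nil] at hu0
            have hu0' := Option.some.inj hu0
            subst hu0'
            cases hl : lr.1 with
            | var m => exact absurd hl (R.lhs_not_var lr hlr m)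
            | app f0 ls0 =>
                rw [hl] at hσ
                simp only [Term.subst] at hσ
                injection hσ with hf hts0
                subst hf
                rw [heq_eq_eq] at hts0
                have hliftSR : ∀ i, liftB (ls0 i) ∈ SR R.liftB := by
                  intro i
                  refine ⟨(liftB lr.1, liftB lr.2), ⟨lr, hlr, rfl⟩, some f,
                    fun j => liftB (ls0 j), ?_, i, isSubtermOf_self _⟩
                  rw [hl]
                  rfl
                have hLM : LhsMatch R.liftB C.enc2 (some f) (fun i => (qs i).1) := by
                  refine ⟨fun i => liftB (ls0 i), liftB lr.2, ⟨lr, hlr, ?_⟩, ?_⟩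
                  · show (liftB lr.1, liftB lr.2) = _
                    rw [hl]
                    rfl
                  · intro i
                    show C.enc2 (stPattern (liftB (ls0 i))) ∈ (qs i).1
                    rw [(ih i (hg i)).1]
                    have hts_i : ts i = (ls0 i).subst σ := congrFun hts0 i
                    have hlift_i : liftB (ts i) = (liftB (ls0 i)).subst (fun n => liftB (σ n)) := by
                      rw [hts_i, liftB_subst]
                    show Reaches C.Γ' (liftB (ts i)) (C.enc2 (stPattern (liftB (ls0 i))))
                    rw [hlift_i]
                    refine instance_reaches (cp_bmatch2_subset C) (cp_bprop_subset C) C.hx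
                      (liftB (ls0 i)) (stPattern_mem_BStateSet (hliftSR i)) _ ?_
                    intro n hn
                    have hgi : ((liftB (ls0 i)).subst (fun n => liftB (σ n))).Ground := by
                      rw [← hlift_i]
                      exact ground_liftB.2 (hg i)
                    exact ground_of_subst_ground hgi n hn
                rcases hP2 with ⟨_, hP2eq⟩ | ⟨hnLM, _⟩
                · refine ⟨C.enc (Term.var 0), ?_, bulletTm, ?_, bullet_reaches C⟩
                  · rw [hq2, hP2eq]
                    exact Or.inr rfl
                  · rw [liftB_app]
                    exact replaceAt_nil _ _
                · exact absurd hLM hnLM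
        | cons i p' =>
            obtain ⟨u0, hu0, hred⟩ := hp
            simp only [Term.subtermAt] at hu0
            split at hu0
            case isTrue hi =>
              obtain ⟨q', hq', u', hu', hru'⟩ :=
                (ih ⟨i, hi⟩ (hg ⟨i, hi⟩)).2 p' ⟨u0, hu0, hred⟩
              obtain ⟨q0, hq0P1, qa, hqa, hrule⟩ := hP1cov ⟨i, hi⟩ q' hq'
              refine ⟨q0, by rw [hq2]; exact Or.inl hq0P1,
                Term.app (some f) (Function.update (fun j => liftB (ts j)) ⟨i, hi⟩ u'),
                ?_, ?_⟩
              · rw [liftB_app]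
                show Term.replaceAt _ _ _ = _
                simp only [Term.replaceAt]
                rw [dif_pos (show i < arB ar (some f) from hi)]
                show Option.map _ ((liftB (ts ⟨i, hi⟩)).replaceAt p' bulletTm) = _
                rw [hu']
                rfl
              · refine Reaches.app (qs := qa) (fun j => ?_) hrule
                by_cases hj : j = ⟨i, hi⟩
                · have hqj : qa j = q' := by
                    have h5 : qa j ∈ if j = ⟨i, hi⟩ then {q'} else (qs j).1 := hqa j
                    rw [if_pos hj] at h5
                    exact h5
                  rw [hj] at hqj
                  rw [hj, Function.update_self, hqj]
                  exact hru'
                · rw [Function.update_of_ne hj]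
                  have hm : qa j ∈ if j = ⟨i, hi⟩ then {q'} else (qs j).1 := hqa j
                  rw [if_neg hj, (ih j (hg j)).1] at hm
                  exact hm
            case isFalse => exact absurd hu0 (by simp)

end DLemma
/-- Let `ℛ` be a linear growing TRS over `𝓕` and `𝒟(ℛ)` the
powerset-pair automaton built from `𝒞'_{NF_{ℛ•}}(ℛ)`.  If `s →_{Γ_𝒟}* [S,P]` with
`P ⊆ Q_f`, then for every redex position `p` of `s`, `s[•]_p` rewrites in `ℛ` to a
ground `ℛ•`-normal form. -/
theorem statement9 {F : Type} [Fintype F] {ar : F → ℕ} {Q : Type} [Fintype Q]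
    (R : TRS F ar) (hlin : R.IsLinear) (hgrow : R.Growing)
    (C : CpSetup Q R.liftB (TRS.NFset R.bullet))
    (s : Term F ar) (hs : s.Ground) (S P : Set Q)
    (h : Reaches (DTrans R.liftB C.Γ' C.enc C.enc2) s (S, P))
    (hPf : P ⊆ C.A.final)
    (p : List ℕ) (hp : R.RedexPos s p) :
    ∃ u, (liftB s).replaceAt p bulletTm = some u ∧
      ∃ t ∈ TRS.NFset R.bullet, RewritesStar R.liftB.rules u t := by
  have hll : R.liftB.LeftLinear := liftB_leftLinear hlin.1
  have hgr : R.liftB.Growing := liftB_growing hgrow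
  obtain ⟨hS, hP⟩ := dlemma C h hs
  obtain ⟨q, hqP, u, hu, hru⟩ := hP p hp
  refine ⟨u, hu, ?_⟩
  have hqQA : q ∈ C.QA := C.hfinal (hPf hqP)
  have hsat : Reaches C.toCSetup.Γsat u q := C.gammap_to_sat hru (Or.inl hqQA)
  obtain ⟨v, hstar, hv0⟩ := C.toCSetup.claim_sat hll hgr hsat
  have hA : Reaches C.A.trans v q := (C.toCSetup.mix hv0).1 hqQA
  refine ⟨v, ?_, hstar⟩
  rw [C.hT]
  exact ⟨reaches_ground hA, q, hPf hqP, hA⟩
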